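/- arXiv:1706.03740 — 2 statements merged into one kernel-verified Lean document; each statement's English description precedes it below -/
import Mathlib

section
/- Genericity implies boundedness (binary case). For all α ∈ (0,1) and D ∈ ℕ there is θ₁ > 0 such that for all γ,γ' ∈ (0,θ₁) there exist κ₀ > 0 and n₀ such that the following holds for all n ≥ n₀ and κ ∈ (0,κ₀]. Let R ∈ ℝ^D with all R_d > 0, let 𝒱 = (v_i : i∈[n]) be an R-bounded, γ'-robustly (γ,R)-generic family of vectors in ℤ^D, and let w ∈ ℤ^D with |({0,1}ⁿ)^𝒱_w| ≥ (1+α)ⁿ. Then the maximum-entropy measure μ^𝒱_w is κ-bounded. -/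
open Finset

noncomputable section

/-- The `R`-scaled sup-norm `max_d |v d| / R d`. -/
noncomputable def rnorm {D : ℕ} (R : Fin D → ℝ) (v : Fin D → ℝ) : ℝ :=
  ⨆ d, |v d| / R d

/-- Evaluation of a family of vectors at a 0/1 vector. -/
def bEval {n D : ℕ} (v : Fin n → Fin D → ℤ) (a : Fin n → Bool) (d : Fin D) : ℤ :=
  ∑ i, if a i then v i d else 0

/-- Product measure on `Jⁿ` from weights `p`. -/
def prodMeas {n : ℕ} {J : Type*} (p : Fin n → J → ℝ) (a : Fin n → J) : ℝ :=
  ∏ i, p i (a i)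

/-- Entropy (base 2) of a finitely supported measure. -/
noncomputable def entropy {α : Type*} [Fintype α] (μ : α → ℝ) : ℝ :=
  -∑ x, μ x * Real.logb 2 (μ x)

/-- `μ ∈ ℳ^𝒱_w`: a probability measure on `{0,1}ⁿ` with `E_{a∼μ} 𝒱(a) = w`. -/
def MemM {n D : ℕ} (v : Fin n → Fin D → ℤ) (w : Fin D → ℤ)
    (μ : (Fin n → Bool) → ℝ) : Prop :=
  (∀ x, 0 ≤ μ x) ∧ (∑ x, μ x = 1) ∧
    ∀ d, ∑ a : Fin n → Bool, μ a * (bEval v a d : ℝ) = (w d : ℝ)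

/-- `v` is `γ'`-robustly `(γ,R)`-generic. -/
def RobustlyGeneric {n D : ℕ} (γ' γ : ℝ) (R : Fin D → ℝ) (v : Fin n → Fin D → ℤ) : Prop :=
  ∀ X : Finset (Fin n), γ' * n < (X.card : ℝ) →
    ∃ e : Fin D → Fin n, Function.Injective e ∧ (∀ d, e d ∈ X) ∧
      γ * ∏ d, R d ≤ |(Matrix.of fun d d' : Fin D => ((v (e d) d' : ℝ))).det|

/-! ### Auxiliary lemmas -/

section Aux

variable {n : ℕ}

lemma sum_prod_eq (g : Fin n → Bool → ℝ) :
    ∑ a : Fin n → Bool, ∏ i, g i (a i) = ∏ i, ∑ j, g i j :=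
  (Fintype.prod_sum g).symm

lemma sum_prod_site (g : Fin n → Bool → ℝ) (hg1 : ∀ i, ∑ j, g i j = 1)
    (i₀ : Fin n) (φ : Bool → ℝ) :
    ∑ a : Fin n → Bool, (∏ i, g i (a i)) * φ (a i₀) = ∑ j, g i₀ j * φ j := by
  classical
  set f : Fin n → Bool → ℝ := fun i j => if i = i₀ then g i j * φ j else g i j with hf
  have key : ∑ a : Fin n → Bool, ∏ i, f i (a i) = ∏ i, ∑ j, f i j := sum_prod_eq f
  have lhs_eq : ∀ a : Fin n → Bool,
      (∏ i, f i (a i)) = (∏ i, g i (a i)) * φ (a i₀) := by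
    intro a
    rw [← Finset.mul_prod_erase univ (fun i => f i (a i)) (mem_univ i₀),
        ← Finset.mul_prod_erase univ (fun i => g i (a i)) (mem_univ i₀)]
    have h2 : ∏ x ∈ univ.erase i₀, f x (a x) = ∏ x ∈ univ.erase i₀, g x (a x) :=
      Finset.prod_congr rfl (fun x hx => by
        simp only [hf]; rw [if_neg (Finset.ne_of_mem_erase hx)])
    rw [h2]
    simp only [hf, if_pos rfl]
    ring
  have rhs_eq : (∏ i, ∑ j, f i j) = ∑ j, g i₀ j * φ j := by
    rw [← Finset.mul_prod_erase univ (fun i => ∑ j, f i j) (mem_univ i₀)]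
    have h2 : ∏ x ∈ univ.erase i₀, (∑ j, f x j) = ∏ x ∈ univ.erase i₀, (1:ℝ) :=
      Finset.prod_congr rfl (fun x hx => by
        simp only [hf]
        rw [Finset.sum_congr rfl (fun j _ => by rw [if_neg (Finset.ne_of_mem_erase hx)])]
        exact hg1 x)
    rw [h2]
    simp only [hf, if_pos rfl, Finset.prod_const_one, mul_one]
  rw [← rhs_eq, ← key]
  exact Finset.sum_congr rfl fun a _ => (lhs_eq a).symm

lemma sum_prod_site' (g : Fin n → Bool → ℝ) (hg1 : ∀ i, ∑ j, g i j = 1)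
    (i₀ : Fin n) (ψ : Bool → ℝ) :
    ∑ a : Fin n → Bool, (∏ i ∈ univ.erase i₀, g i (a i)) * ψ (a i₀) = ∑ j, ψ j := by
  classical
  set f : Fin n → Bool → ℝ := fun i j => if i = i₀ then ψ j else g i j with hf
  have key : ∑ a : Fin n → Bool, ∏ i, f i (a i) = ∏ i, ∑ j, f i j := sum_prod_eq f
  have lhs_eq : ∀ a : Fin n → Bool,
      (∏ i, f i (a i)) = (∏ i ∈ univ.erase i₀, g i (a i)) * ψ (a i₀) := by
    intro a
    rw [← Finset.mul_prod_erase univ (fun i => f i (a i)) (mem_univ i₀)]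
    have h2 : ∏ x ∈ univ.erase i₀, f x (a x) = ∏ x ∈ univ.erase i₀, g x (a x) :=
      Finset.prod_congr rfl (fun x hx => by
        simp only [hf]; rw [if_neg (Finset.ne_of_mem_erase hx)])
    rw [h2]
    simp only [hf, if_pos rfl]
    ring
  have rhs_eq : (∏ i, ∑ j, f i j) = ∑ j, ψ j := by
    rw [← Finset.mul_prod_erase univ (fun i => ∑ j, f i j) (mem_univ i₀)]
    have h2 : ∏ x ∈ univ.erase i₀, (∑ j, f x j) = ∏ x ∈ univ.erase i₀, (1:ℝ) :=
      Finset.prod_congr rfl (fun x hx => by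
        simp only [hf]
        rw [Finset.sum_congr rfl (fun j _ => by rw [if_neg (Finset.ne_of_mem_erase hx)])]
        exact hg1 x)
    rw [h2]
    simp only [hf, if_pos rfl, Finset.prod_const_one, mul_one]
  rw [← rhs_eq, ← key]
  exact Finset.sum_congr rfl fun a _ => (lhs_eq a).symm

lemma negMulLog_prod' {ι : Type*} [DecidableEq ι] (s : Finset ι) (f : ι → ℝ) :
    Real.negMulLog (∏ i ∈ s, f i)
      = ∑ i ∈ s, (∏ j ∈ s.erase i, f j) * Real.negMulLog (f i) := by
  induction s using Finset.induction_on with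
  | empty => simp
  | insert _ _ ha ih =>
    rename_i a t
    rw [Finset.prod_insert ha, Real.negMulLog_mul, ih, Finset.sum_insert ha,
        Finset.erase_insert ha]
    congr 1
    rw [Finset.mul_sum]
    refine Finset.sum_congr rfl fun i hi => ?_
    have hia : i ≠ a := fun h => ha (h ▸ hi)
    rw [Finset.erase_insert_of_ne hia.symm,
        Finset.prod_insert (fun h => ha (Finset.mem_of_mem_erase h))]
    ring

lemma entropy_eq_negMulLog {α : Type*} [Fintype α] (μ : α → ℝ) :
    entropy μ = (∑ x, Real.negMulLog (μ x)) / Real.log 2 := by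
  unfold entropy
  rw [Finset.sum_div, ← Finset.sum_neg_distrib]
  refine Finset.sum_congr rfl fun x _ => ?_
  rw [Real.logb, Real.negMulLog]
  ring

lemma entropy_prodMeas (g : Fin n → Bool → ℝ) (hg1 : ∀ i, ∑ j, g i j = 1) :
    entropy (prodMeas g) = (∑ i, Real.binEntropy (g i true)) / Real.log 2 := by
  rw [entropy_eq_negMulLog]
  congr 1
  have step1 : ∀ a : Fin n → Bool, Real.negMulLog (prodMeas g a)
      = ∑ i, (∏ j ∈ univ.erase i, g j (a j)) * Real.negMulLog (g i (a i)) := by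
    intro a
    exact negMulLog_prod' univ (fun i => g i (a i))
  rw [Finset.sum_congr rfl fun a _ => step1 a, Finset.sum_comm]
  refine Finset.sum_congr rfl fun i _ => ?_
  rw [sum_prod_site' g hg1 i (fun j => Real.negMulLog (g i j))]
  have hfalse : g i false = 1 - g i true := by
    have := hg1 i
    rw [Fintype.sum_bool] at this
    linarith
  rw [Fintype.sum_bool, hfalse, Real.binEntropy_eq_negMulLog_add_negMulLog_one_sub]

lemma expect_prodMeas {D : ℕ} (g : Fin n → Bool → ℝ) (hg1 : ∀ i, ∑ j, g i j = 1)
    (v : Fin n → Fin D → ℤ) (d : Fin D) :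
    ∑ a : Fin n → Bool, prodMeas g a * (bEval v a d : ℝ)
      = ∑ i, g i true * (v i d : ℝ) := by
  have cast_eq : ∀ a : Fin n → Bool,
      ((bEval v a d : ℤ) : ℝ) = ∑ i, (if a i then (v i d : ℝ) else 0) := by
    intro a; unfold bEval; push_cast; rfl
  calc ∑ a : Fin n → Bool, prodMeas g a * (bEval v a d : ℝ)
      = ∑ a : Fin n → Bool, ∑ i, prodMeas g a * (if a i then (v i d : ℝ) else 0) := by
        refine Finset.sum_congr rfl fun a _ => ?_
        rw [cast_eq a, Finset.mul_sum]
    _ = ∑ i, ∑ a : Fin n → Bool, (∏ j, g j (a j)) * (if a i then (v i d : ℝ) else 0) :=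
        Finset.sum_comm
    _ = ∑ i, g i true * (v i d : ℝ) := by
        refine Finset.sum_congr rfl fun i _ => ?_
        rw [sum_prod_site g hg1 i (fun j => if j then (v i d : ℝ) else 0)]
        rw [Fintype.sum_bool]
        simp

lemma abs_det_le {D : ℕ} (A : Matrix (Fin D) (Fin D) ℝ) (R : Fin D → ℝ)
    (hA : ∀ d d', |A d d'| ≤ R d) :
    |A.det| ≤ Nat.factorial D * ∏ d, R d := by
  rw [Matrix.det_apply']
  calc |∑ σ : Equiv.Perm (Fin D), (Equiv.Perm.sign σ : ℤ) * ∏ i, A (σ i) i|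
      ≤ ∑ σ : Equiv.Perm (Fin D), |(Equiv.Perm.sign σ : ℤ) * ∏ i, A (σ i) i| :=
        Finset.abs_sum_le_sum_abs _ _
    _ ≤ ∑ σ : Equiv.Perm (Fin D), ∏ d, R d := by
        refine Finset.sum_le_sum fun σ _ => ?_
        rw [abs_mul]
        have h1 : |((Equiv.Perm.sign σ : ℤ) : ℝ)| = 1 := by
          rcases Int.units_eq_one_or (Equiv.Perm.sign σ) with h | h <;> simp [h]
        rw [h1, one_mul, Finset.abs_prod]
        calc ∏ i, |A (σ i) i| ≤ ∏ i, R (σ i) :=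
              Finset.prod_le_prod (fun i _ => abs_nonneg _) (fun i _ => hA _ _)
          _ = ∏ d, R d := Equiv.prod_comp σ R
    _ = Nat.factorial D * ∏ d, R d := by
        rw [Finset.sum_const, Finset.card_univ, Fintype.card_perm, Fintype.card_fin,
          nsmul_eq_mul]

lemma cramer_solve {D : ℕ} (M : Matrix (Fin D) (Fin D) ℝ) (u : Fin D → ℝ)
    (hdet : M.det ≠ 0) (d' : Fin D) :
    ∑ d, ((M.det)⁻¹ * M.transpose.cramer u d) * M d d' = u d' := by
  have key := Matrix.mulVec_cramer M.transpose u
  have h1 : (Matrix.mulVec M.transpose (M.transpose.cramer u)) d' = M.transpose.det * u d' := by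
    rw [key]; simp [Matrix.smul_apply, smul_eq_mul]
  rw [Matrix.mulVec, dotProduct] at h1
  have h2 : ∑ d, M.transpose d' d * M.transpose.cramer u d = M.det * u d' := by
    rw [h1, Matrix.det_transpose]
  calc ∑ d, ((M.det)⁻¹ * M.transpose.cramer u d) * M d d'
      = (M.det)⁻¹ * ∑ d, M.transpose d' d * M.transpose.cramer u d := by
        rw [Finset.mul_sum]
        refine Finset.sum_congr rfl fun d _ => ?_
        rw [Matrix.transpose_apply]; ring
    _ = (M.det)⁻¹ * (M.det * u d') := by rw [h2]
    _ = u d' := by field_simp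

lemma abs_le_of_rnorm_le {D : ℕ} (R : Fin D → ℝ) (hR : ∀ d, 0 < R d)
    (u : Fin D → ℝ) (h : rnorm R u ≤ 1) (d : Fin D) : |u d| ≤ R d := by
  unfold rnorm at h
  have hb : BddAbove (Set.range fun d => |u d| / R d) :=
    Set.Finite.bddAbove (Set.finite_range _)
  have h1 : |u d| / R d ≤ 1 := le_trans (le_ciSup hb d) h
  calc |u d| = |u d| / R d * R d := (div_mul_cancel₀ _ (ne_of_gt (hR d))).symm
    _ ≤ 1 * R d := by nlinarith [hR d]
    _ = R d := one_mul _

lemma binEntropy_lipschitz {m : ℝ} (hm : 0 < m) (hm2 : m ≤ 1/2) {x y : ℝ}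
    (hx : x ∈ Set.Icc m (1 - m)) (hy : y ∈ Set.Icc m (1 - m)) :
    |Real.binEntropy x - Real.binEntropy y| ≤ (-Real.log m) * |x - y| := by
  have hconv : Convex ℝ (Set.Icc m (1 - m)) := convex_Icc _ _
  have hderiv : ∀ p ∈ Set.Icc m (1 - m),
      HasDerivWithinAt Real.binEntropy (Real.log (1 - p) - Real.log p) (Set.Icc m (1 - m)) p := by
    intro p hp
    obtain ⟨hp1, hp2⟩ := hp
    exact (Real.hasDerivAt_binEntropy (by linarith) (by linarith)).hasDerivWithinAt
  have hbound : ∀ p ∈ Set.Icc m (1 - m), ‖Real.log (1 - p) - Real.log p‖ ≤ -Real.log m := by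
    intro p hp
    obtain ⟨hp1, hp2⟩ := hp
    have l1 : Real.log m ≤ Real.log p := Real.log_le_log hm hp1
    have l2 : Real.log p ≤ 0 := Real.log_nonpos (by linarith) (by linarith)
    have l3 : Real.log m ≤ Real.log (1 - p) := Real.log_le_log hm (by linarith)
    have l4 : Real.log (1 - p) ≤ 0 := Real.log_nonpos (by linarith) (by linarith)
    rw [Real.norm_eq_abs, abs_le]
    constructor <;> linarith
  have := hconv.norm_image_sub_le_of_norm_hasDerivWithin_le hderiv hbound hy hx
  simpa [Real.norm_eq_abs] using this

lemma entropy_lower {n D : ℕ} (v : Fin n → Fin D → ℤ) (w : Fin D → ℤ) (α : ℝ) (hα : 0 < α)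
    (hcard : (1 + α) ^ n ≤ (({a : Fin n → Bool | ∀ d, bEval v a d = w d}.ncard : ℝ)))
    (E : ℝ) (hmax : ∀ μ, MemM v w μ → entropy μ ≤ E) :
    (n : ℝ) * Real.logb 2 (1 + α) ≤ E := by
  classical
  set S : Finset (Fin n → Bool) := univ.filter (fun a => ∀ d, bEval v a d = w d) with hS
  have hset : {a : Fin n → Bool | ∀ d, bEval v a d = w d} = ↑S := by
    ext a; simp [hS]
  rw [hset, Set.ncard_coe_finset] at hcard
  set N : ℕ := S.card with hN
  have hpow : (0:ℝ) < (1 + α) ^ n := pow_pos (by linarith) n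
  have hNpos : 0 < (N:ℝ) := lt_of_lt_of_le hpow hcard
  have hNne : (N:ℝ) ≠ 0 := ne_of_gt hNpos
  set μ : (Fin n → Bool) → ℝ := fun a => if a ∈ S then (N:ℝ)⁻¹ else 0 with hμ
  have hsum : ∑ a, μ a = 1 := by
    have h2 : ∑ a, μ a = ∑ a, (if a ∈ S then (N:ℝ)⁻¹ else 0) := rfl
    rw [h2, Finset.sum_ite_mem, Finset.univ_inter, Finset.sum_const, nsmul_eq_mul, ← hN]
    field_simp
  have hmem : MemM v w μ := by
    refine ⟨fun x => ?_, hsum, fun d => ?_⟩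
    · rw [hμ]; dsimp only; split
      · positivity
      · exact le_refl 0
    · have h2 : ∑ a : Fin n → Bool, μ a * (bEval v a d : ℝ)
          = ∑ a, (if a ∈ S then (N:ℝ)⁻¹ * (w d : ℝ) else 0) := by
        refine Finset.sum_congr rfl fun a _ => ?_
        rw [hμ]; dsimp only
        split
        · rename_i h
          rw [(Finset.mem_filter.mp h).2 d]
        · rw [zero_mul]
      rw [h2, Finset.sum_ite_mem, Finset.univ_inter, Finset.sum_const, nsmul_eq_mul, ← hN]
      field_simp
  have hent : entropy μ = Real.logb 2 N := by
    unfold entropy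
    have h2 : ∑ a, μ a * Real.logb 2 (μ a)
        = ∑ a, (if a ∈ S then (N:ℝ)⁻¹ * Real.logb 2 (N:ℝ)⁻¹ else 0) := by
      refine Finset.sum_congr rfl fun a _ => ?_
      rw [hμ]; dsimp only
      split <;> simp
    rw [h2, Finset.sum_ite_mem, Finset.univ_inter, Finset.sum_const, nsmul_eq_mul, ← hN,
      Real.logb_inv]
    field_simp
  have h1 : (n:ℝ) * Real.logb 2 (1 + α) ≤ Real.logb 2 N := by
    rw [← Real.logb_pow]
    exact Real.logb_le_logb_of_le (by norm_num) hpow hcard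
  calc (n:ℝ) * Real.logb 2 (1 + α) ≤ Real.logb 2 N := h1
    _ = entropy μ := hent.symm
    _ ≤ E := hmax μ hmem

lemma exists_small_binEntropy (ε : ℝ) (hε : 0 < ε) (b : ℝ) (hb : 0 < b) :
    ∃ δ : ℝ, 0 < δ ∧ δ ≤ b ∧ Real.binEntropy δ < ε := by
  have hc : ContinuousAt Real.binEntropy 0 := Real.binEntropy_continuous.continuousAt
  rw [Metric.continuousAt_iff] at hc
  obtain ⟨δ', hδ', h⟩ := hc ε hε
  refine ⟨min (δ'/2) b, by positivity, min_le_right _ _, ?_⟩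
  have hlt : dist (min (δ'/2) b) 0 < δ' := by
    rw [Real.dist_eq, sub_zero, abs_of_pos (by positivity)]
    calc min (δ'/2) b ≤ δ'/2 := min_le_left _ _
      _ < δ' := by linarith
  have := h hlt
  rw [Real.binEntropy_zero, Real.dist_eq, sub_zero] at this
  exact lt_of_le_of_lt (le_abs_self _) this

end Aux

set_option maxHeartbeats 1000000 in
/-- **Genericity implies boundedness (binary case).** -/
theorem genericity_implies_boundedness
    (α : ℝ) (hα : α ∈ Set.Ioo (0:ℝ) 1) (D : ℕ) :
    ∃ θ₁ > (0:ℝ), ∀ γ ∈ Set.Ioo (0:ℝ) θ₁, ∀ γ' ∈ Set.Ioo (0:ℝ) θ₁,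
    ∃ κ₀ > (0:ℝ), ∃ n₀ : ℕ, ∀ n, n₀ ≤ n → ∀ κ ∈ Set.Ioc (0:ℝ) κ₀,
    ∀ R : Fin D → ℝ, (∀ d, 0 < R d) →
    ∀ v : Fin n → Fin D → ℤ,
      (∀ i, rnorm R (fun d => (v i d : ℝ)) ≤ 1) →
      RobustlyGeneric γ' γ R v →
    ∀ w : Fin D → ℤ,
      (1 + α) ^ n ≤ (({a : Fin n → Bool | ∀ d, bEval v a d = w d}.ncard : ℝ)) →
    ∀ p : Fin n → Bool → ℝ,
      (∀ i j, 0 ≤ p i j) → (∀ i, ∑ j, p i j = 1) →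
      MemM v w (prodMeas p) →
      (∀ μ, MemM v w μ → entropy μ ≤ entropy (prodMeas p)) →
    ∀ i j, p i j ∈ Set.Icc κ (1 - κ) := by
  classical
  obtain ⟨hα0, hα1⟩ := hα
  set c : ℝ := Real.logb 2 (1 + α) with hc
  have hc0 : 0 < c := Real.logb_pos (by norm_num) (by linarith)
  have hc1 : c < 1 := by
    have h2 : Real.logb 2 (1 + α) < Real.logb 2 2 :=
      Real.logb_lt_logb (by norm_num) (by linarith) (by linarith)
    rwa [Real.logb_self_eq_one (by norm_num)] at h2
  refine ⟨c/4, by positivity, ?_⟩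
  rintro γ ⟨hγ0, hγθ⟩ γ' ⟨hγ'0, hγ'θ⟩
  set C : ℝ := (Nat.factorial D : ℝ) / γ with hC
  have hC0 : 0 < C := div_pos (Nat.cast_pos.mpr (Nat.factorial_pos D)) hγ0
  -- choose δ
  obtain ⟨δ, hδ0, hδ14, hδent⟩ :=
    exists_small_binEntropy (c/2 * Real.log 2) (by positivity) (1/4) (by norm_num)
  set L : ℝ := -Real.log (δ/2) with hL
  have hL0 : 0 < L := by
    rw [hL, neg_pos]
    exact Real.log_neg (by positivity) (by linarith)
  set t : ℝ := min (min (1/8) (δ/(2*(C+1)))) (Real.exp (-((D:ℝ)*L*C+1))) with ht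
  have ht0 : 0 < t := by
    apply lt_min (lt_min (by norm_num) (by positivity)) (Real.exp_pos _)
  have ht18 : t ≤ 1/8 := le_trans (min_le_left _ _) (min_le_left _ _)
  have htδ : t * (C+1) ≤ δ/2 := by
    have h2 : t ≤ δ/(2*(C+1)) := le_trans (min_le_left _ _) (min_le_right _ _)
    rw [le_div_iff₀ (by positivity)] at h2
    nlinarith
  have htexp : t ≤ Real.exp (-((D:ℝ)*L*C+1)) := min_le_right _ _
  -- choose κ₀
  obtain ⟨κ₀, hκ₀0, hκ₀small, hκ₀ent⟩ :=
    exists_small_binEntropy t ht0 (min (δ/2) (1/8)) (by positivity)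
  have hκ₀δ : κ₀ ≤ δ/2 := le_trans hκ₀small (min_le_left _ _)
  have hκ₀18 : κ₀ ≤ 1/8 := le_trans hκ₀small (min_le_right _ _)
  refine ⟨κ₀, hκ₀0, 1, ?_⟩
  rintro n hn κ ⟨hκ0, hκκ₀⟩ R hR v hvb hgen w hw p hp0 hp1 hpM hmax i j
  by_contra hout
  have hlog2 : (0:ℝ) < Real.log 2 := Real.log_pos (by norm_num)
  -- row sums
  have hsumi : ∀ i' : Fin n, p i' false + p i' true = 1 := by
    intro i'
    have := hp1 i'
    rwa [Fintype.sum_bool, add_comm] at this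
  have hple : ∀ i' j', p i' j' ≤ 1 := by
    intro i' j'
    have h1 := hp0 i' true
    have h2 := hp0 i' false
    have h3 := hsumi i'
    cases j' <;> linarith
  -- the bad coordinate
  obtain ⟨b, hbκ⟩ : ∃ b : Bool, p i b < κ := by
    rw [Set.mem_Icc, not_and_or] at hout
    push_neg at hout
    rcases hout with h | h
    · exact ⟨j, h⟩
    · refine ⟨!j, ?_⟩
      have hj : p i (!j) = 1 - p i j := by
        cases j
        · simpa using by linarith [hsumi i]
        · simpa using by linarith [hsumi i]
      rw [hj]; linarith
  set m : ℝ := p i b with hm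
  have hm0 : 0 ≤ m := hp0 i b
  have hmκ₀ : m < κ₀ := lt_of_lt_of_le hbκ hκκ₀
  have hmb' : p i (!b) = 1 - m := by
    cases b
    · simpa using by linarith [hsumi i]
    · simpa using by linarith [hsumi i]
  -- the good set
  set G : Finset (Fin n) := univ.filter (fun i' => δ ≤ p i' true ∧ p i' true ≤ 1 - δ) with hG
  -- entropy lower bound
  have hElow : (n:ℝ) * c ≤ entropy (prodMeas p) :=
    entropy_lower v w α hα0 hw _ hmax
  have hEprod : entropy (prodMeas p) = (∑ i', Real.binEntropy (p i' true)) / Real.log 2 :=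
    entropy_prodMeas p hp1
  have hmono : ∀ x y : ℝ, 0 ≤ x → x ≤ y → y ≤ 1/2 →
      Real.binEntropy x ≤ Real.binEntropy y := by
    intro x y h1 h2 h3
    rcases eq_or_lt_of_le h2 with rfl | h4
    · exact le_refl _
    · exact le_of_lt (Real.binEntropy_strictMonoOn
        (Set.mem_Icc.mpr ⟨h1, by norm_num; linarith⟩)
        (Set.mem_Icc.mpr ⟨by linarith, by norm_num; linarith⟩) h4)
  have hGbound : (c/2) * n ≤ (G.card : ℝ) := by
    have hsplit : ∑ i', Real.binEntropy (p i' true)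
        = ∑ i' ∈ G, Real.binEntropy (p i' true)
          + ∑ i' ∈ univ.filter (fun i' => ¬(δ ≤ p i' true ∧ p i' true ≤ 1 - δ)),
              Real.binEntropy (p i' true) := by
      rw [hG]
      exact (Finset.sum_filter_add_sum_filter_not univ _ _).symm
    have hup1 : ∑ i' ∈ G, Real.binEntropy (p i' true) ≤ (G.card : ℝ) * Real.log 2 := by
      rw [← nsmul_eq_mul, ← Finset.sum_const]
      exact Finset.sum_le_sum fun i' _ => Real.binEntropy_le_log_two
    set B : Finset (Fin n) :=
      univ.filter (fun i' => ¬(δ ≤ p i' true ∧ p i' true ≤ 1 - δ)) with hB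
    have hup2 : ∑ i' ∈ B, Real.binEntropy (p i' true)
        ≤ (B.card : ℝ) * ((c/2) * Real.log 2) := by
      rw [← nsmul_eq_mul, ← Finset.sum_const]
      refine Finset.sum_le_sum fun i' hi' => ?_
      rw [hB, Finset.mem_filter, not_and_or, not_le, not_le] at hi'
      refine le_of_lt (lt_of_le_of_lt ?_ hδent)
      rcases hi'.2 with h | h
      · exact hmono _ _ (hp0 i' true) (le_of_lt h) (by linarith)
      · rw [← Real.binEntropy_one_sub]
        exact hmono _ _ (by linarith [hple i' true]) (by linarith) (by linarith)
    have hcards : (G.card : ℝ) + (B.card : ℝ) = n := by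
      have h9 : G.card + B.card = n := by
        have h10 := Finset.card_filter_add_card_filter_not
          (s := (univ : Finset (Fin n)))
          (p := fun i' => δ ≤ p i' true ∧ p i' true ≤ 1 - δ)
        rw [Finset.card_univ, Fintype.card_fin] at h10
        rw [hG, hB]
        exact h10
      exact_mod_cast h9
    have hkey : (n:ℝ) * c * Real.log 2 ≤ ∑ i', Real.binEntropy (p i' true) := by
      rw [hEprod, le_div_iff₀ hlog2] at hElow
      exact hElow
    rw [hsplit] at hkey
    have hBn : (B.card : ℝ) = n - G.card := by linarith
    rw [hBn] at hup2
    have hg0 : (0:ℝ) ≤ (G.card : ℝ) := Nat.cast_nonneg _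
    have h11 : ((n:ℝ) * c) * Real.log 2
        ≤ ((G.card : ℝ) + ((n:ℝ) - G.card) * (c/2)) * Real.log 2 := by
      have h12 : ((G.card : ℝ) + ((n:ℝ) - G.card) * (c/2)) * Real.log 2
          = (G.card : ℝ) * Real.log 2 + ((n:ℝ) - G.card) * (c/2 * Real.log 2) := by ring
      rw [h12]
      calc ((n:ℝ) * c) * Real.log 2 ≤ _ := hkey
        _ ≤ _ := add_le_add hup1 hup2
    have h13 : (n:ℝ) * c ≤ (G.card : ℝ) + ((n:ℝ) - G.card) * (c/2) :=
      le_of_mul_le_mul_right h11 hlog2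
    linarith [mul_nonneg hg0 hc0.le]
  -- apply robust genericity to the good set
  have hGbig : γ' * n < (G.card : ℝ) := by
    have hn1 : (1:ℝ) ≤ n := by exact_mod_cast hn
    have : γ' * n < (c/2) * n := by
      apply mul_lt_mul_of_pos_right _ (by linarith)
      linarith
    linarith
  obtain ⟨e, he_inj, heG, hdet⟩ := hgen G hGbig
  set M : Matrix (Fin D) (Fin D) ℝ :=
    Matrix.of (fun d d' : Fin D => ((v (e d) d' : ℝ))) with hM
  have hprodR : (0:ℝ) < ∏ d, R d := Finset.prod_pos (fun d _ => hR d)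
  have hdetpos : 0 < |M.det| := lt_of_lt_of_le (by positivity) hdet
  have hdetne : M.det ≠ 0 := fun h => by simp [h] at hdetpos
  -- the bad index is not in the good set
  have hiG : i ∉ G := by
    rw [hG, Finset.mem_filter]
    rintro ⟨-, h1, h2⟩
    have hκ₀δ' : κ₀ < δ := lt_of_le_of_lt hκ₀δ (by linarith)
    cases b
    · simp only [Bool.not_false] at hmb'
      rw [hmb'] at h2
      linarith
    · rw [← hm] at h1
      linarith
  have hei : ∀ d, e d ≠ i := fun d h => hiG (h ▸ heG d)
  -- Cramér coefficients
  set u : Fin D → ℝ := fun d' => (v i d' : ℝ) with hu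
  set cc : Fin D → ℝ := fun d => (M.det)⁻¹ * M.transpose.cramer u d with hcc
  have hsolve : ∀ d', ∑ d, cc d * (v (e d) d' : ℝ) = (v i d' : ℝ) := by
    intro d'
    have := cramer_solve M u hdetne d'
    simpa [hcc, hM, hu] using this
  have hvabs : ∀ i' d, |(v i' d : ℝ)| ≤ R d := fun i' d =>
    abs_le_of_rnorm_le R hR _ (hvb i') d
  have hccb : ∀ d, |cc d| ≤ C := by
    intro d
    have hcram : |M.transpose.cramer u d| ≤ Nat.factorial D * ∏ d, R d := by
      rw [Matrix.cramer_apply]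
      apply abs_det_le _ R
      intro r s
      rw [Matrix.updateCol_apply]
      split
      · exact hvabs i r
      · exact hvabs (e s) r
    rw [hcc]
    dsimp only
    rw [abs_mul, abs_inv]
    have h1 : (|M.det|)⁻¹ ≤ (γ * ∏ d, R d)⁻¹ :=
      inv_anti₀ (by positivity) hdet
    calc |M.det|⁻¹ * |M.transpose.cramer u d|
        ≤ (γ * ∏ d, R d)⁻¹ * (Nat.factorial D * ∏ d, R d) := by
          apply mul_le_mul h1 hcram (abs_nonneg _) (by positivity)
      _ = C := by
          rw [hC]
          field_simp
  -- the perturbation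
  set ε : ℝ := cond b 1 (-1) with hε
  have hεabs : |ε| = 1 := by cases b <;> simp [hε]
  set s : Fin n → ℝ :=
    fun j' => (if j' = i then ε * t else 0) - ε * t * ∑ d, (if e d = j' then cc d else 0)
    with hs
  have hsi : s i = ε * t := by
    rw [hs]
    dsimp only
    rw [if_pos rfl]
    rw [Finset.sum_congr rfl fun d _ => if_neg (hei d)]
    simp
  have hsumcc : ∀ d, ∑ d', (if e d' = e d then cc d' else 0) = cc d := by
    intro d
    rw [Finset.sum_eq_single d (fun d' _ hne => if_neg (fun h => hne (he_inj h)))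
      (fun h => absurd (mem_univ d) h), if_pos rfl]
  have hse : ∀ d, s (e d) = -(ε * t * cc d) := by
    intro d
    rw [hs]
    dsimp only
    rw [if_neg (hei d), hsumcc d]
    ring
  have hs0 : ∀ j', j' ≠ i → (∀ d, e d ≠ j') → s j' = 0 := by
    intro j' h1 h2
    rw [hs]
    dsimp only
    rw [if_neg h1, Finset.sum_congr rfl fun d _ => if_neg (h2 d)]
    simp
  have hseabs : ∀ d, |s (e d)| ≤ C * t := by
    intro d
    rw [hse d, abs_neg, abs_mul, abs_mul, hεabs, one_mul, abs_of_pos ht0]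
    calc t * |cc d| ≤ t * C := by
          apply mul_le_mul_of_nonneg_left (hccb d) ht0.le
      _ = C * t := mul_comm _ _
  have hCtδ : C * t ≤ δ / 2 := by nlinarith
  have hslin : ∀ d', ∑ j', s j' * (v j' d' : ℝ) = 0 := by
    intro d'
    have hsplit : ∀ j', s j' * (v j' d' : ℝ)
        = (if j' = i then ε * t * (v j' d' : ℝ) else 0)
          - ε * t * ∑ d, (if e d = j' then cc d * (v j' d' : ℝ) else 0) := by
      intro j'
      have e1 : (if j' = i then ε * t else 0) * (v j' d' : ℝ)
          = (if j' = i then ε * t * (v j' d' : ℝ) else 0) := by split <;> simp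
      have e2 : (∑ d, (if e d = j' then cc d else 0)) * (v j' d' : ℝ)
          = ∑ d, (if e d = j' then cc d * (v j' d' : ℝ) else 0) := by
        rw [Finset.sum_mul]
        exact Finset.sum_congr rfl fun d _ => by split <;> simp
      show ((if j' = i then ε * t else 0) - ε * t * ∑ d, (if e d = j' then cc d else 0))
          * (v j' d' : ℝ) = _
      rw [sub_mul, e1, mul_assoc (ε * t), e2]
    rw [Finset.sum_congr rfl fun j' _ => hsplit j', Finset.sum_sub_distrib]
    rw [Finset.sum_ite_eq' univ i (fun j' => ε * t * (v j' d' : ℝ)), if_pos (mem_univ i)]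
    rw [← Finset.mul_sum, Finset.sum_comm]
    have h3 : ∀ d, ∑ j', (if e d = j' then cc d * (v j' d' : ℝ) else 0)
        = cc d * (v (e d) d' : ℝ) := by
      intro d
      rw [Finset.sum_ite_eq univ (e d) (fun j' => cc d * (v j' d' : ℝ)), if_pos (mem_univ _)]
    rw [Finset.sum_congr rfl fun d _ => h3 d, hsolve d']
    ring
  -- the perturbed weights
  set q : Fin n → Bool → ℝ :=
    fun j' jj => cond jj (p j' true + s j') (p j' false - s j') with hq
  have hqt : ∀ j', q j' true = p j' true + s j' := fun j' => rfl
  have hqf : ∀ j', q j' false = p j' false - s j' := fun j' => rfl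
  have hq1 : ∀ j', ∑ jj, q j' jj = 1 := by
    intro j'
    rw [Fintype.sum_bool, hqt, hqf]
    linarith [hsumi j']
  -- interval facts
  have hpe : ∀ d, δ ≤ p (e d) true ∧ p (e d) true ≤ 1 - δ := by
    intro d
    have := heG d
    rw [hG, Finset.mem_filter] at this
    exact this.2
  have hqe : ∀ d, δ/2 ≤ q (e d) true ∧ q (e d) true ≤ 1 - δ/2 := by
    intro d
    obtain ⟨h1, h2⟩ := hpe d
    obtain ⟨h4a, h4b⟩ := abs_le.mp (hseabs d)
    have h5 : -(δ/2) ≤ s (e d) := le_trans (neg_le_neg hCtδ) h4a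
    have h6 : s (e d) ≤ δ/2 := le_trans h4b hCtδ
    rw [hqt]
    constructor <;> linarith
  -- values at the bad coordinate
  have hqib : q i b = m + t := by
    cases b
    · rw [hqf, hsi, hε, ← hm]
      simp only [Bool.cond_false]
      ring
    · rw [hqt, hsi, hε, ← hm]
      simp only [Bool.cond_true]
      ring
  have hqib' : q i (!b) = 1 - (m + t) := by
    cases b
    · simp only [Bool.not_false]
      rw [hqt, hsi, hε]
      simp only [Bool.cond_false]
      have h20 : p i true = 1 - m := by simpa using hmb'
      rw [h20]; ring
    · simp only [Bool.not_true]
      rw [hqf, hsi, hε]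
      simp only [Bool.cond_true]
      have h20 : p i false = 1 - m := by simpa using hmb'
      rw [h20]; ring
  have hmt12 : m + t ≤ 1/2 := by linarith
  -- nonnegativity of q
  have hq0 : ∀ j' jj, 0 ≤ q j' jj := by
    intro j' jj
    by_cases h1 : j' = i
    · subst h1
      rcases Bool.eq_or_eq_not jj b with rfl | rfl
      · rw [hqib]; linarith
      · rw [hqib']; linarith
    · by_cases h2 : ∃ d, e d = j'
      · obtain ⟨d, rfl⟩ := h2
        obtain ⟨h3, h4⟩ := hqe d
        cases jj
        · rw [hqf]
          have h5 := abs_le.mp (hseabs d)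
          have h6 := (hpe d).1
          have h7 : p (e d) false = 1 - p (e d) true := by linarith [hsumi (e d)]
          rw [h7]
          linarith [(hpe d).2]
        · linarith
      · push_neg at h2
        have h3 := hs0 j' h1 h2
        cases jj
        · rw [hqf, h3]; simpa using hp0 j' false
        · rw [hqt, h3]; simpa using hp0 j' true
  -- prodMeas q is in ℳ
  have hqmem : MemM v w (prodMeas q) := by
    refine ⟨fun a => Finset.prod_nonneg fun j' _ => hq0 j' (a j'), ?_, fun d => ?_⟩
    · rw [show (∑ x : Fin n → Bool, prodMeas q x) = ∑ a : Fin n → Bool, ∏ i', q i' (a i') from rfl,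
        sum_prod_eq q, Finset.prod_congr rfl fun j' _ => hq1 j']
      exact Finset.prod_const_one
    · rw [expect_prodMeas q hq1 v d]
      have hbase : ∑ i', p i' true * (v i' d : ℝ) = (w d : ℝ) := by
        rw [← expect_prodMeas p hp1 v d]
        exact hpM.2.2 d
      calc ∑ i', q i' true * (v i' d : ℝ)
          = ∑ i', (p i' true * (v i' d : ℝ) + s i' * (v i' d : ℝ)) := by
            refine Finset.sum_congr rfl fun i' _ => ?_
            rw [hqt]; ring
        _ = (w d : ℝ) := by
            rw [Finset.sum_add_distrib, hbase, hslin d, add_zero]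
  -- entropy comparison
  have hcontr : entropy (prodMeas q) ≤ entropy (prodMeas p) := hmax _ hqmem
  set F : Fin n → ℝ :=
    fun j' => Real.binEntropy (q j' true) - Real.binEntropy (p j' true) with hF
  have hdiff : entropy (prodMeas q) - entropy (prodMeas p) = (∑ j', F j') / Real.log 2 := by
    rw [entropy_prodMeas q hq1, entropy_prodMeas p hp1, div_sub_div_same,
      ← Finset.sum_sub_distrib]
  set T : Finset (Fin n) := insert i (Finset.image e univ) with hT
  have hiT : i ∉ Finset.image e univ := by
    simp only [Finset.mem_image]
    rintro ⟨d, -, h⟩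
    exact hei d h
  have hFzero : ∀ x ∈ univ, x ∉ T → F x = 0 := by
    intro x _ hx
    rw [hT, Finset.mem_insert, Finset.mem_image] at hx
    push_neg at hx
    obtain ⟨hx1, hx2⟩ := hx
    have hsx : s x = 0 := hs0 x hx1 (fun d h => hx2 d (mem_univ d) h)
    simp only [hF]
    rw [hqt, hsx, add_zero, sub_self]
  have hsumT : ∑ j', F j' = F i + ∑ d, F (e d) := by
    rw [← Finset.sum_subset (Finset.subset_univ T) hFzero, hT,
      Finset.sum_insert hiT, Finset.sum_image (fun x _ y _ h => he_inj h)]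
  -- bound at the bad coordinate
  have hq_true : Real.binEntropy (q i true) = Real.binEntropy (m + t) := by
    cases b
    · have h20 : q i true = 1 - (m + t) := by simpa using hqib'
      rw [h20, Real.binEntropy_one_sub]
    · have h20 : q i true = m + t := hqib
      rw [h20]
  have hp_true : Real.binEntropy (p i true) = Real.binEntropy m := by
    cases b
    · have h20 : p i true = 1 - m := by simpa using hmb'
      rw [h20, Real.binEntropy_one_sub]
    · have h20 : p i true = m := hm.symm
      rw [h20]
  have hFi : Real.binEntropy t - Real.binEntropy κ₀ ≤ F i := by
    simp only [hF]
    rw [hq_true, hp_true]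
    have h1 : Real.binEntropy t ≤ Real.binEntropy (m + t) :=
      hmono t (m + t) ht0.le (by linarith) hmt12
    have h2 : Real.binEntropy m ≤ Real.binEntropy κ₀ :=
      hmono m κ₀ hm0 hmκ₀.le (by linarith)
    linarith
  -- bound at the generic coordinates
  have hFe : ∀ d, -(L * (C * t)) ≤ F (e d) := by
    intro d
    have hmem1 : q (e d) true ∈ Set.Icc (δ/2) (1 - δ/2) := Set.mem_Icc.mpr (hqe d)
    have hmem2 : p (e d) true ∈ Set.Icc (δ/2) (1 - δ/2) := by
      obtain ⟨h1, h2⟩ := hpe d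
      exact Set.mem_Icc.mpr ⟨by linarith, by linarith⟩
    have h1 := binEntropy_lipschitz (m := δ/2) (by positivity) (by linarith) hmem1 hmem2
    have h2 : q (e d) true - p (e d) true = s (e d) := by rw [hqt]; ring
    rw [h2] at h1
    have h3 : (-Real.log (δ/2)) * |s (e d)| ≤ L * (C * t) := by
      rw [← hL]
      exact mul_le_mul_of_nonneg_left (hseabs d) hL0.le
    have h4 : |F (e d)| ≤ L * (C * t) := le_trans h1 h3
    have h5 := (abs_le.mp h4).1
    linarith
  -- assemble
  have hsum_ge : (Real.binEntropy t - Real.binEntropy κ₀) - (D:ℝ) * (L * (C * t))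
      ≤ ∑ j', F j' := by
    rw [hsumT]
    have h1 : ∑ d : Fin D, (-(L * (C * t))) ≤ ∑ d, F (e d) :=
      Finset.sum_le_sum fun d _ => hFe d
    rw [Finset.sum_const, Finset.card_univ, Fintype.card_fin, nsmul_eq_mul] at h1
    have h2 : (D:ℝ) * (-(L * (C * t))) = -((D:ℝ) * (L * (C * t))) := by ring
    rw [h2] at h1
    linarith
  have hbig : t * ((D:ℝ) * L * C + 1) ≤ Real.binEntropy t := by
    have h1 : Real.log t ≤ -((D:ℝ) * L * C + 1) := by
      calc Real.log t ≤ Real.log (Real.exp (-((D:ℝ) * L * C + 1))) :=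
            Real.log_le_log ht0 htexp
        _ = -((D:ℝ) * L * C + 1) := Real.log_exp _
    have h2 : Real.binEntropy t = Real.negMulLog t + Real.negMulLog (1 - t) :=
      Real.binEntropy_eq_negMulLog_add_negMulLog_one_sub t
    have h3 : 0 ≤ Real.negMulLog (1 - t) := Real.negMulLog_nonneg (by linarith) (by linarith)
    have h4 : t * ((D:ℝ) * L * C + 1) ≤ Real.negMulLog t := by
      rw [Real.negMulLog]
      have h5 : t * Real.log t ≤ t * (-((D:ℝ) * L * C + 1)) :=
        mul_le_mul_of_nonneg_left h1 ht0.le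
      linarith [h5]
    linarith
  have hpos : 0 < ∑ j', F j' := by
    have hring : t * ((D:ℝ) * L * C + 1) - (D:ℝ) * (L * (C * t)) = t := by ring
    have := hκ₀ent
    linarith
  have hlt : entropy (prodMeas p) < entropy (prodMeas q) := by
    have h1 : 0 < (∑ j', F j') / Real.log 2 := div_pos hpos hlog2
    linarith [hdiff, h1]
  linarith
end
end

section
/- Independence number of a product of two graphs. For all ε,c ∈ (0,1) there is δ₀ > 0 such that for all δ ∈ (0,δ₀] there is N₀ such that the following holds for all N ≥ N₀. Let N₁,N₂ ∈ ℕ with N ≤ N₁^c ≤ N₂ ≤ N₁^{1/c}, and for i = 1,2 let G_i be a graph on vertex set V_i with |V_i| = N_i and α(G_i) ≤ N_i^{1−ε}. Then α(G₁ × G₂) ≤ (N₁N₂)^{1−δ}. -/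
open Finset

noncomputable section

/-- The tensor (categorical) product of two graphs: `(u₁,u₂) ~ (v₁,v₂)` iff
`u₁ ~ v₁` and `u₂ ~ v₂`. -/
def graphProd {V₁ V₂ : Type*} (G₁ : SimpleGraph V₁) (G₂ : SimpleGraph V₂) :
    SimpleGraph (V₁ × V₂) where
  Adj u v := G₁.Adj u.1 v.1 ∧ G₂.Adj u.2 v.2
  symm := ⟨fun _ _ h => ⟨h.1.symm, h.2.symm⟩⟩
  loopless := ⟨fun u h => G₁.irrefl h.1⟩

/-- `s` is an independent set of the graph `G`. -/
def IndepSet {V : Type*} (G : SimpleGraph V) (s : Set V) : Prop :=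
  ∀ a ∈ s, ∀ b ∈ s, ¬ G.Adj a b

lemma exists_maximal_indep {V : Type*} [DecidableEq V] (G : SimpleGraph V) (F : Finset V) :
    ∃ I : Finset V, I ⊆ F ∧ IndepSet G (I : Set V) ∧ ∀ v ∈ F, v ∉ I → ∃ w ∈ I, G.Adj v w := by
  classical
  have hne : (F.powerset.filter (fun J : Finset V => IndepSet G (J : Set V))).Nonempty :=
    ⟨∅, by simp [IndepSet]⟩
  obtain ⟨I, hI, hmax⟩ := Finset.exists_max_image _ Finset.card hne
  simp only [Finset.mem_filter, Finset.mem_powerset] at hI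
  refine ⟨I, hI.1, hI.2, ?_⟩
  intro v hvF hvI
  by_contra hno
  push_neg at hno
  have hind : IndepSet G ↑(insert v I) := by
    intro a ha b hb hab
    simp only [Finset.coe_insert, Set.mem_insert_iff, Finset.mem_coe] at ha hb
    rcases ha with rfl | ha
    · rcases hb with rfl | hb
      · exact G.irrefl hab
      · exact hno b hb hab
    · rcases hb with rfl | hb
      · exact hno a ha hab.symm
      · exact hI.2 a ha b hb hab
  have hmem : insert v I ∈ F.powerset.filter (fun J : Finset V => IndepSet G (J : Set V)) := by
    simp only [Finset.mem_filter, Finset.mem_powerset]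
    exact ⟨Finset.insert_subset hvF hI.1, hind⟩
  have := hmax _ hmem
  have : I.card < (insert v I).card := by
    rw [Finset.card_insert_of_notMem hvI]; omega
  omega

lemma prod_indep_card_bound {V₁ V₂ : Type} [Fintype V₁] [Fintype V₂]
    (G₁ : SimpleGraph V₁) (G₂ : SimpleGraph V₂) {m₁ m₂ : ℝ}
    (h₁ : ∀ t : Set V₁, IndepSet G₁ t → (t.ncard : ℝ) ≤ m₁)
    (h₂ : ∀ t : Set V₂, IndepSet G₂ t → (t.ncard : ℝ) ≤ m₂)
    (s : Set (V₁ × V₂)) (hs : IndepSet (graphProd G₁ G₂) s) :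
    (s.ncard : ℝ) ≤ Fintype.card V₁ * m₂ + Fintype.card V₂ * m₁ := by
  classical
  set F : V₁ → Finset V₂ := fun x => univ.filter (fun v => (x, v) ∈ s) with hF
  choose I hIF hIind hIdom using fun x => exists_maximal_indep G₂ (F x)
  have hmemF : ∀ x v, v ∈ F x ↔ (x, v) ∈ s := by
    intro x v; simp [hF]
  -- cardinality of s as sum of fibers
  have hcards : s.ncard = ∑ x : V₁, (F x).card := by
    rw [Set.ncard_eq_toFinset_card']
    rw [Finset.card_eq_sum_card_fiberwise (f := Prod.fst) (t := univ) (fun x _ => mem_univ _)]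
    refine Finset.sum_congr rfl fun x _ => ?_
    have : (s.toFinset.filter (fun p => p.1 = x)) = (F x).image (fun v => (x, v)) := by
      ext ⟨a, b⟩
      simp only [Finset.mem_filter, Set.mem_toFinset, Finset.mem_image, hmemF]
      constructor
      · rintro ⟨hab, rfl⟩; exact ⟨b, hab, rfl⟩
      · rintro ⟨v, hv, h⟩; cases h; exact ⟨hv, rfl⟩
    rw [this, Finset.card_image_of_injective _ (fun a b h => by injection h)]
  -- split fibers
  have hsplit : ∀ x, (F x).card = (I x).card + (F x \ I x).card := by
    intro x
    rw [← Finset.card_sdiff_add_card_eq_card (hIF x)]; omega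
  -- double counting of the sdiff part
  set B : V₂ → Finset V₁ := fun v => univ.filter (fun x => v ∈ F x \ I x) with hB
  have hdouble : ∑ x : V₁, (F x \ I x).card = ∑ v : V₂, (B v).card := by
    have h1 : ∀ x, (F x \ I x).card = ∑ v : V₂, if v ∈ F x \ I x then 1 else 0 := by
      intro x
      rw [← Finset.card_filter]
      congr 1
      ext v; simp
    have h2 : ∀ v, (B v).card = ∑ x : V₁, if v ∈ F x \ I x then 1 else 0 := by
      intro v
      rw [hB, Finset.card_filter]
    simp only [h1, h2]
    exact Finset.sum_comm
  -- B v is independent in G₁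
  have hBind : ∀ v, IndepSet G₁ ((B v : Set V₁)) := by
    intro v a ha b hb hab
    simp only [hB, Finset.coe_filter, Set.mem_setOf_eq, Finset.mem_univ, true_and] at ha hb
    obtain ⟨w, hwI, hvw⟩ := hIdom a v (Finset.mem_sdiff.1 ha).1 (Finset.mem_sdiff.1 ha).2
    have haw : (a, w) ∈ s := (hmemF a w).1 (hIF a hwI)
    have hbv : (b, v) ∈ s := (hmemF b v).1 (Finset.mem_sdiff.1 hb).1
    exact hs _ haw _ hbv ⟨hab, hvw.symm⟩
  -- assemble
  have hIbound : ∀ x, ((I x).card : ℝ) ≤ m₂ := by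
    intro x
    have := h₂ (I x) (hIind x)
    rwa [Set.ncard_coe_finset] at this
  have hBbound : ∀ v, ((B v).card : ℝ) ≤ m₁ := by
    intro v
    have := h₁ (B v) (hBind v)
    rwa [Set.ncard_coe_finset] at this
  have : (s.ncard : ℝ) = ∑ x : V₁, ((I x).card : ℝ) + ∑ v : V₂, ((B v).card : ℝ) := by
    rw [hcards]
    push_cast
    rw [← Nat.cast_sum, ← Nat.cast_sum, ← Nat.cast_sum]
    norm_cast
    calc ∑ x : V₁, (F x).card = ∑ x : V₁, ((I x).card + (F x \ I x).card) := by
          exact Finset.sum_congr rfl fun x _ => hsplit x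
      _ = ∑ x : V₁, (I x).card + ∑ x : V₁, (F x \ I x).card := Finset.sum_add_distrib
      _ = _ := by rw [hdouble]
  rw [this]
  gcongr ?_ + ?_
  · calc ∑ x : V₁, ((I x).card : ℝ) ≤ ∑ _x : V₁, m₂ := Finset.sum_le_sum fun x _ => hIbound x
      _ = Fintype.card V₁ * m₂ := by rw [Finset.sum_const, Finset.card_univ, nsmul_eq_mul]
  · calc ∑ v : V₂, ((B v).card : ℝ) ≤ ∑ _v : V₂, m₁ := Finset.sum_le_sum fun v _ => hBbound v
      _ = Fintype.card V₂ * m₁ := by rw [Finset.sum_const, Finset.card_univ, nsmul_eq_mul]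


lemma analytic_bound (ε c δ : ℝ) (hε : ε ∈ Set.Ioo (0:ℝ) 1) (hc : c ∈ Set.Ioo (0:ℝ) 1)
    (hδ : 0 < δ) (hδ₀ : δ ≤ ε * c / (2 * (c + 1))) (R₁ R₂ : ℝ)
    (h1 : (2:ℝ) ^ (2/ε) ≤ R₁) (h2 : (2:ℝ) ^ (2/ε) ≤ R₂)
    (h12 : R₁ ^ c ≤ R₂) (h21 : R₂ ≤ R₁ ^ (1/c)) :
    R₁ * R₂ ^ ((1:ℝ) - ε) + R₂ * R₁ ^ ((1:ℝ) - ε) ≤ (R₁ * R₂) ^ ((1:ℝ) - δ) := by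
  obtain ⟨hε0, hε1⟩ := hε
  obtain ⟨hc0, hc1⟩ := hc
  have hbase : (1:ℝ) ≤ (2:ℝ) ^ (2/ε) :=
    Real.one_le_rpow one_le_two (by positivity)
  have hR₁1 : (1:ℝ) ≤ R₁ := le_trans hbase h1
  have hR₂1 : (1:ℝ) ≤ R₂ := le_trans hbase h2
  have hR₁0 : (0:ℝ) < R₁ := lt_of_lt_of_le one_pos hR₁1
  have hR₂0 : (0:ℝ) < R₂ := lt_of_lt_of_le one_pos hR₂1
  -- R₁ ≤ R₂ ^ (1/c) : from h12
  have hR₁le : R₁ ≤ R₂ ^ (1/c) := by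
    have := Real.rpow_le_rpow (by positivity) h12 (le_of_lt (by positivity : (0:ℝ) < 1/c))
    rwa [← Real.rpow_mul hR₁0.le, mul_one_div, div_self hc0.ne', Real.rpow_one] at this
  -- key small factors
  have hexp : δ / c + δ - ε ≤ -(ε/2) := by
    have hδ' : δ * (2*(c+1)) ≤ ε * c := by
      rw [← le_div_iff₀ (by positivity)]; exact hδ₀
    have h3 : (δ/c + δ) ≤ ε/2 := by
      rw [div_add' _ _ _ hc0.ne', div_le_iff₀ hc0]; nlinarith [hδ']
    linarith
  have hhalf : ∀ R : ℝ, 1 ≤ R → (2:ℝ) ^ (2/ε) ≤ R → R ^ (-(ε/2)) ≤ 1/2 := by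
    intro R hR1 hR2
    have hRpos : (0:ℝ) < R := lt_of_lt_of_le one_pos hR1
    have h2R : (2:ℝ) ≤ R ^ (ε/2) := by
      have := Real.rpow_le_rpow (by positivity) hR2 (by positivity : (0:ℝ) ≤ ε/2)
      rwa [← Real.rpow_mul (by norm_num), div_mul_div_comm, mul_comm ε 2, div_self (by positivity), Real.rpow_one] at this
    rw [Real.rpow_neg hRpos.le]
    rw [inv_le_comm₀ (by positivity) (by norm_num)]
    linarith [h2R]
  have key : ∀ A B : ℝ, 1 ≤ A → 1 ≤ B → A ≤ B ^ (1/c) → (2:ℝ)^(2/ε) ≤ B →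
      A * B ^ ((1:ℝ) - ε) ≤ (1/2) * (A ^ ((1:ℝ) - δ) * B ^ ((1:ℝ) - δ)) := by
    intro A B hA1 hB1 hAB hB2
    have hA0 : (0:ℝ) < A := lt_of_lt_of_le one_pos hA1
    have hB0 : (0:ℝ) < B := lt_of_lt_of_le one_pos hB1
    have hfac : A ^ δ * B ^ (δ - ε) ≤ 1/2 := by
      have e1 : A ^ δ ≤ B ^ (δ/c) := by
        have := Real.rpow_le_rpow hA0.le hAB hδ.le
        rwa [← Real.rpow_mul hB0.le, one_div_mul_eq_div] at this
      calc A ^ δ * B ^ (δ - ε) ≤ B ^ (δ/c) * B ^ (δ - ε) := by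
            gcongr
        _ = B ^ (δ/c + (δ - ε)) := (Real.rpow_add hB0 _ _).symm
        _ ≤ B ^ (-(ε/2)) := Real.rpow_le_rpow_of_exponent_le hB1 (by linarith [hexp])
        _ ≤ 1/2 := hhalf B hB1 hB2
    calc A * B ^ ((1:ℝ) - ε)
        = (A ^ ((1:ℝ) - δ) * B ^ ((1:ℝ) - δ)) * (A ^ δ * B ^ (δ - ε)) := by
          rw [mul_mul_mul_comm, ← Real.rpow_add hA0, ← Real.rpow_add hB0]
          norm_num
      _ ≤ (A ^ ((1:ℝ) - δ) * B ^ ((1:ℝ) - δ)) * (1/2) := by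
          apply mul_le_mul_of_nonneg_left hfac
          positivity
      _ = (1/2) * (A ^ ((1:ℝ) - δ) * B ^ ((1:ℝ) - δ)) := mul_comm _ _
  have k1 := key R₁ R₂ hR₁1 hR₂1 hR₁le h2
  have k2 := key R₂ R₁ hR₂1 hR₁1 h21 h1
  have hprod : (R₁ * R₂) ^ ((1:ℝ) - δ) = R₁ ^ ((1:ℝ) - δ) * R₂ ^ ((1:ℝ) - δ) :=
    Real.mul_rpow hR₁0.le hR₂0.le
  rw [hprod]
  have : R₂ ^ ((1:ℝ) - δ) * R₁ ^ ((1:ℝ) - δ) = R₁ ^ ((1:ℝ) - δ) * R₂ ^ ((1:ℝ) - δ) := mul_comm _ _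
  linarith [k1, k2, this.le]

/-- **Independence number of a product of two graphs.** -/
theorem independence_number_of_product (ε c : ℝ)
    (hε : ε ∈ Set.Ioo (0:ℝ) 1) (hc : c ∈ Set.Ioo (0:ℝ) 1) :
    ∃ δ₀ > (0:ℝ), ∀ δ ∈ Set.Ioc (0:ℝ) δ₀,
    ∃ N₀ : ℕ, ∀ N : ℕ, N₀ ≤ N →
    ∀ (N₁ N₂ : ℕ) (V₁ V₂ : Type) [Fintype V₁] [Fintype V₂],
      Fintype.card V₁ = N₁ → Fintype.card V₂ = N₂ →
      (N : ℝ) ≤ (N₁ : ℝ) ^ c → (N₁ : ℝ) ^ c ≤ (N₂ : ℝ) → (N₂ : ℝ) ≤ (N₁ : ℝ) ^ (1 / c) →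
    ∀ (G₁ : SimpleGraph V₁) (G₂ : SimpleGraph V₂),
      (∀ s : Set V₁, IndepSet G₁ s → (s.ncard : ℝ) ≤ (N₁ : ℝ) ^ ((1:ℝ) - ε)) →
      (∀ s : Set V₂, IndepSet G₂ s → (s.ncard : ℝ) ≤ (N₂ : ℝ) ^ ((1:ℝ) - ε)) →
    ∀ s : Set (V₁ × V₂), IndepSet (graphProd G₁ G₂) s →
      (s.ncard : ℝ) ≤ ((N₁ : ℝ) * (N₂ : ℝ)) ^ ((1:ℝ) - δ) := by
  obtain ⟨hε0, hε1⟩ := hε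
  obtain ⟨hc0, hc1⟩ := hc
  refine ⟨ε * c / (2 * (c + 1)), by positivity, ?_⟩
  rintro δ ⟨hδ0, hδ₀⟩
  refine ⟨⌈(2:ℝ) ^ (2/ε)⌉₊ + 1, ?_⟩
  intro N hN N₁ N₂ V₁ V₂ _ _ hV₁ hV₂ hNc hN12 hN21 G₁ G₂ h₁ h₂ s hs
  have hNR : (2:ℝ) ^ (2/ε) ≤ (N : ℝ) := by
    calc (2:ℝ) ^ (2/ε) ≤ (⌈(2:ℝ) ^ (2/ε)⌉₊ : ℝ) := Nat.le_ceil _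
      _ ≤ (N : ℝ) := by exact_mod_cast Nat.le_of_succ_le hN
  have hN1R : (1:ℝ) ≤ (N : ℝ) := by
    have : (1:ℕ) ≤ N := le_trans (by omega) hN
    exact_mod_cast this
  have hR₁1 : (1:ℝ) ≤ (N₁ : ℝ) := by
    by_contra h
    push_neg at h
    have hN₁0 : N₁ = 0 := by
      by_contra h0
      have : (1:ℝ) ≤ (N₁ : ℝ) := by exact_mod_cast Nat.one_le_iff_ne_zero.2 h0
      linarith
    rw [hN₁0] at hNc
    simp only [Nat.cast_zero] at hNc
    rw [Real.zero_rpow hc0.ne'] at hNc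
    linarith
  have h1 : (2:ℝ) ^ (2/ε) ≤ (N₁ : ℝ) := by
    calc (2:ℝ) ^ (2/ε) ≤ (N : ℝ) := hNR
      _ ≤ (N₁ : ℝ) ^ c := hNc
      _ ≤ (N₁ : ℝ) ^ (1:ℝ) := Real.rpow_le_rpow_of_exponent_le hR₁1 hc1.le
      _ = (N₁ : ℝ) := Real.rpow_one _
  have h2 : (2:ℝ) ^ (2/ε) ≤ (N₂ : ℝ) := le_trans (le_trans hNR hNc) hN12
  have hmain : (s.ncard : ℝ) ≤
      (N₁ : ℝ) * (N₂ : ℝ) ^ ((1:ℝ) - ε) + (N₂ : ℝ) * (N₁ : ℝ) ^ ((1:ℝ) - ε) := by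
    have := prod_indep_card_bound G₁ G₂ h₁ h₂ s hs
    rwa [hV₁, hV₂] at this
  calc (s.ncard : ℝ) ≤ (N₁ : ℝ) * (N₂ : ℝ) ^ ((1:ℝ) - ε) + (N₂ : ℝ) * (N₁ : ℝ) ^ ((1:ℝ) - ε) :=
        hmain
    _ ≤ ((N₁ : ℝ) * (N₂ : ℝ)) ^ ((1:ℝ) - δ) :=
        analytic_bound ε c δ ⟨hε0, hε1⟩ ⟨hc0, hc1⟩ hδ0 hδ₀ _ _ h1 h2 hN12 hN21
end
end
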